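/- Let (A, μ, α) be a multiplicative Hom-power associative algebra over a field k of characteristic 0. Then for each n ≥ 1, the Hom-algebra A^n = (A, μ_n, α^{2^n}) with multiplication μ_n(x,y) = α^{2^n - 1}(xy) is a multiplicative Hom-power associative algebra. -/

import Mathlib

variable {k A : Type*} [Field k] [CharZero k] [AddCommGroup A] [Module k A]

/-- The `n`-th Hom-power: `x^1 = x`, `x^n = x^{n-1} · α^{n-2}(x)`. -/
def homPow (μ : A →ₗ[k] A →ₗ[k] A) (α : A →ₗ[k] A) (x : A) : ℕ → A
  | 0 => x
  | 1 => x
  | n + 2 => μ (homPow μ α x (n + 1)) ((α ^ n) x)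

/-- `A` is `n`-th Hom-power associative. -/
def IsNthHomPowerAssoc (μ : A →ₗ[k] A →ₗ[k] A) (α : A →ₗ[k] A) (n : ℕ) : Prop :=
  ∀ (x : A) (i : ℕ), 1 ≤ i → i ≤ n - 1 →
    homPow μ α x n =
      μ ((α ^ (n - i - 1)) (homPow μ α x i)) ((α ^ (i - 1)) (homPow μ α x (n - i)))

/-- `A` is Hom-power associative. -/
def IsHomPowerAssoc (μ : A →ₗ[k] A →ₗ[k] A) (α : A →ₗ[k] A) : Prop :=
  ∀ n : ℕ, 2 ≤ n → IsNthHomPowerAssoc μ α n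

/-- `A` is up to `n`-th Hom-power associative. -/
def IsUpToNthHomPowerAssoc (μ : A →ₗ[k] A →ₗ[k] A) (α : A →ₗ[k] A) (n : ℕ) : Prop :=
  ∀ m : ℕ, 2 ≤ m → m ≤ n → IsNthHomPowerAssoc μ α m

/-- The Hom-algebra `(A, μ, α)` is multiplicative. -/
def IsMultiplicative (μ : A →ₗ[k] A →ₗ[k] A) (α : A →ₗ[k] A) : Prop :=
  ∀ x y : A, α (μ x y) = μ (α x) (α y)


set_option linter.unusedSectionVars false

lemma hcomp (α : A →ₗ[k] A) (a b : ℕ) (x : A) : (α ^ a) ((α ^ b) x) = (α ^ (a + b)) x := by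
  rw [pow_add, Module.End.mul_apply]

lemma hmulpow (μ : A →ₗ[k] A →ₗ[k] A) (α : A →ₗ[k] A) (hmul : IsMultiplicative μ α)
    (m : ℕ) (x y : A) : (α ^ m) (μ x y) = μ ((α ^ m) x) ((α ^ m) y) := by
  induction m generalizing x y with
  | zero => simp
  | succ m ih =>
      rw [pow_succ, Module.End.mul_apply, hmul, ih,
        ← Module.End.mul_apply (α ^ m) α x, ← Module.End.mul_apply (α ^ m) α y]

lemma homPow_derived (μ : A →ₗ[k] A →ₗ[k] A) (α : A →ₗ[k] A) (hmul : IsMultiplicative μ α)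
    (N : ℕ) (x : A) : ∀ m : ℕ,
    homPow (μ.compr₂ (α ^ N)) (α ^ (N + 1)) x m = (α ^ (N * (m - 1))) (homPow μ α x m)
  | 0 => by simp [homPow]
  | 1 => by simp [homPow]
  | m + 2 => by
      rw [homPow, homPow_derived μ α hmul N x (m + 1), LinearMap.compr₂_apply,
        ← pow_mul, Nat.add_sub_cancel]
      have h1 : (N + 1) * m = N * m + m := by ring
      rw [h1, ← hcomp α (N * m) m, ← hmulpow μ α hmul, hcomp, ← homPow,
        show N + N * m = N * (m + 2 - 1) from by rw [show m + 2 - 1 = m + 1 from rfl]; ring]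

lemma derived_key (μ : A →ₗ[k] A →ₗ[k] A) (α : A →ₗ[k] A)
    (hmul : IsMultiplicative μ α) (hpa : IsHomPowerAssoc μ α) (N : ℕ) :
    IsMultiplicative (μ.compr₂ (α ^ N)) (α ^ (N + 1)) ∧
    IsHomPowerAssoc (μ.compr₂ (α ^ N)) (α ^ (N + 1)) := by
  constructor
  · intro x y
    simp only [LinearMap.compr₂_apply]
    rw [hcomp, ← hmulpow μ α hmul, hcomp, show N + 1 + N = N + (N + 1) from by omega]
  · intro n hn x i hi1 hi2
    obtain ⟨a, b, rfl, rfl⟩ : ∃ a b, i = a + 1 ∧ n = a + b + 2 :=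
      ⟨i - 1, n - i - 1, by omega, by omega⟩
    have e1 : a + b + 2 - (a + 1) = b + 1 := by omega
    have e2 : a + b + 2 - (a + 1) - 1 = b := by omega
    have e3 : a + 1 - 1 = a := by omega
    have e4 : a + b + 2 - 1 = a + b + 1 := by omega
    rw [e2, e1, e3, homPow_derived μ α hmul, homPow_derived μ α hmul, homPow_derived μ α hmul,
      LinearMap.compr₂_apply, ← pow_mul, ← pow_mul, e4, Nat.add_sub_cancel, Nat.add_sub_cancel]
    have h2 : (N + 1) * b + N * a = N * (a + b) + b := by ring
    have h3 : (N + 1) * a + N * b = N * (a + b) + a := by ring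
    rw [hcomp, hcomp, h2, h3, ← hcomp α (N * (a + b)) b, ← hcomp α (N * (a + b)) a,
      ← hmulpow μ α hmul, hcomp]
    have h4 : N + N * (a + b) = N * (a + b + 1) := by ring
    rw [h4]
    congr 1
    have key := hpa (a + b + 2) (by omega) x (a + 1) (by omega) (by omega)
    rw [e2, e1, e3] at key
    exact key

/-- Corollary: every multiplicative Hom-power associative algebra `(A,μ,α)` yields
a derived sequence `A^n = (A, α^{2^n-1}∘μ, α^{2^n})` of multiplicative
Hom-power associative algebras. -/
theorem stmt1 (μ : A →ₗ[k] A →ₗ[k] A) (α : A →ₗ[k] A)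
    (hmul : IsMultiplicative μ α) (hpa : IsHomPowerAssoc μ α) :
    ∀ n : ℕ, 1 ≤ n →
      IsMultiplicative (μ.compr₂ (α ^ (2 ^ n - 1))) (α ^ (2 ^ n)) ∧
      IsHomPowerAssoc (μ.compr₂ (α ^ (2 ^ n - 1))) (α ^ (2 ^ n)) := by
  intro n _
  have h : 2 ^ n - 1 + 1 = 2 ^ n := Nat.sub_add_cancel Nat.one_le_two_pow
  rw [← h]
  exact derived_key μ α hmul hpa (2 ^ n - 1)
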